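/- Let S be a configuration, and suppose that for every positive integer m there exists a canonically Ramsey configuration S′ with more than m points such that S′ contains a copy of S. Then S is Ramsey: for every positive integer r there exists n such that every colouring of ℝⁿ with at most r colours admits a monochromatic copy of S. -/

import Mathlib

/-- A copy of a configuration `C ⊆ ℝˢ` in `ℝⁿ`: the image of `C` under a
distance-preserving map `ℝˢ → ℝⁿ`. -/
def IsCopy {s n : ℕ} (C : Set (EuclideanSpace ℝ (Fin s)))
    (X : Set (EuclideanSpace ℝ (Fin n))) : Prop :=
  ∃ f : EuclideanSpace ℝ (Fin s) → EuclideanSpace ℝ (Fin n), Isometry f ∧ X = f '' C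

/-- A set `X` is monochromatic under a colouring `χ` if all its points receive
the same colour. -/
def Monochromatic {α κ : Type*} (χ : α → κ) (X : Set α) : Prop :=
  ∀ x ∈ X, ∀ y ∈ X, χ x = χ y

/-- A set `X` is rainbow under a colouring `χ` if all its points receive
pairwise distinct colours. -/
def RainbowSet {α κ : Type*} (χ : α → κ) (X : Set α) : Prop :=
  Set.InjOn χ X

/-- The cuboid `{0, b 0} × ⋯ × {0, b (s-1)} ⊆ ℝˢ`. -/
def cuboid {s : ℕ} (b : Fin s → ℝ) : Set (EuclideanSpace ℝ (Fin s)) :=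
  {x | ∀ i, x i = 0 ∨ x i = b i}

/-- A configuration is canonically Ramsey if some `ℝⁿ` admits, for every colouring
with arbitrarily many colours, a monochromatic or rainbow copy of it. -/
def CanonicallyRamsey {s : ℕ} (C : Set (EuclideanSpace ℝ (Fin s))) : Prop :=
  ∃ n : ℕ, 0 < n ∧ ∀ (κ : Type) (χ : EuclideanSpace ℝ (Fin n) → κ),
    ∃ X : Set (EuclideanSpace ℝ (Fin n)), IsCopy C X ∧ (Monochromatic χ X ∨ RainbowSet χ X)

/-- A configuration is Ramsey if for every number of colours `r` there is `n` such
that every `r`-colouring of `ℝⁿ` admits a monochromatic copy of it. -/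
def IsRamsey {s : ℕ} (C : Set (EuclideanSpace ℝ (Fin s))) : Prop :=
  ∀ r : ℕ, 0 < r → ∃ n : ℕ, ∀ χ : EuclideanSpace ℝ (Fin n) → Fin r,
    ∃ X : Set (EuclideanSpace ℝ (Fin n)), IsCopy C X ∧ Monochromatic χ X

/-- If a configuration `S` is contained in a copy inside arbitrarily large canonically
Ramsey configurations, then `S` is Ramsey. -/
theorem isRamsey_of_subset_large_canonicallyRamsey (s : ℕ)
    (S : Set (EuclideanSpace ℝ (Fin s))) (hS : S.Finite)
    (h : ∀ m : ℕ, ∃ (s' : ℕ) (S' : Set (EuclideanSpace ℝ (Fin s'))),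
      S'.Finite ∧ m < S'.ncard ∧ CanonicallyRamsey S' ∧ ∃ X ⊆ S', IsCopy S X) :
    IsRamsey S := by
  intro r hr
  obtain ⟨s', S', hfin, hcard, ⟨n, hn, hcan⟩, X, hXS', f₀, hf₀, hX⟩ := h r
  refine ⟨n, fun χ => ?_⟩
  obtain ⟨X', ⟨f, hf, rfl⟩, hmr⟩ := hcan (Fin r) χ
  have hmono : Monochromatic χ (f '' S') := by
    rcases hmr with hm | hrain
    · exact hm
    · exfalso
      have hinj : Set.InjOn (χ ∘ f) S' := by
        intro a ha b hb hab
        exact hf.injective (hrain (Set.mem_image_of_mem f ha) (Set.mem_image_of_mem f hb) hab)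
      have hle : S'.ncard ≤ r := by
        have h1 : ((χ ∘ f) '' S').ncard = S'.ncard := Set.ncard_image_of_injOn hinj
        have h2 : ((χ ∘ f) '' S').ncard ≤ (Set.univ : Set (Fin r)).ncard :=
          Set.ncard_le_ncard (Set.subset_univ _) Set.finite_univ
        rw [h1, Set.ncard_univ, Nat.card_eq_fintype_card, Fintype.card_fin] at h2; exact h2
      omega
  refine ⟨f '' X, ⟨f ∘ f₀, hf.comp hf₀, by rw [hX, ← Set.image_comp]⟩, ?_⟩
  intro x hx y hy
  exact hmono x (Set.image_mono (f := f) hXS' hx) y (Set.image_mono (f := f) hXS' hy)
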